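/- Let Π(x) = [e^{−ixA} Φ₁ e^{ixA} Φ₂] (an n×(p+p) matrix function), S(x) = I_n + ∫₀ˣ Π(t) Π(t)* dt, and suppose A − A* = i Π(0) j Π(0)* with j = diag(I_p, −I_p). Then for all x ≥ 0, A S(x) − S(x) A* = i Π(x) j Π(x)*. -/

import Mathlib

open Matrix MeasureTheory NormedSpace

section LocalInst

attribute [local instance] Matrix.linftyOpNormedAddCommGroup Matrix.linftyOpNormedSpace
  Matrix.linftyOpNormedRing Matrix.linftyOpNormedAlgebra

noncomputable abbrev matTop {m n : Type*} [Fintype m] [Fintype n] :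
    TopologicalSpace (Matrix m n ℂ) :=
  (Matrix.linftyOpNormedAddCommGroup (m := m) (n := n) (α := ℂ)).toUniformSpace.toTopologicalSpace

attribute [local instance] matTop

namespace Stmt11Aux

variable {l m o : Type*} [Fintype l] [Fintype m] [Fintype o]

noncomputable def mulCLM : Matrix l m ℂ →L[ℝ] Matrix m o ℂ →L[ℝ] Matrix l o ℂ :=
  LinearMap.toContinuousLinearMap
    { toFun := fun A => LinearMap.toContinuousLinearMap
        { toFun := fun B => A * B
          map_add' := Matrix.mul_add A
          map_smul' := fun c B => Matrix.mul_smul A c B }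
      map_add' := fun A A' => by ext B i j; simp [Matrix.add_mul]
      map_smul' := fun c A => by ext B i j; simp [Matrix.smul_mul] }

@[simp] lemma mulCLM_apply (A : Matrix l m ℂ) (B : Matrix m o ℂ) :
    mulCLM A B = A * B := rfl

theorem _root_.HasDerivAt.matmul {f : ℝ → Matrix l m ℂ} {g : ℝ → Matrix m o ℂ}
    {f' : Matrix l m ℂ} {g' : Matrix m o ℂ} {x : ℝ}
    (hf : HasDerivAt f f' x) (hg : HasDerivAt g g' x) :
    HasDerivAt (fun t => f t * g t) (f' * g x + f x * g') x := by
  have h1 := (mulCLM (l := l) (m := m) (o := o)).hasFDerivAt (x := f x)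
  have h2 := h1.comp_hasDerivAt x hf
  have h := h2.clm_apply hg
  simpa using h

noncomputable def ctCLM : Matrix l m ℂ →L[ℝ] Matrix m l ℂ :=
  LinearMap.toContinuousLinearMap
    { toFun := conjTranspose
      map_add' := conjTranspose_add
      map_smul' := fun c M => by ext i j; simp [conjTranspose_apply] }

theorem _root_.HasDerivAt.ct {f : ℝ → Matrix l m ℂ} {f' : Matrix l m ℂ} {x : ℝ}
    (hf : HasDerivAt f f' x) : HasDerivAt (fun t => (f t)ᴴ) f'ᴴ x := by
  exact ctCLM.hasFDerivAt.comp_hasDerivAt x hf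

noncomputable def entryCLM (i : l) (k : m) : Matrix l m ℂ →L[ℝ] ℂ :=
  LinearMap.toContinuousLinearMap
    { toFun := fun M => M i k
      map_add' := fun _ _ => rfl
      map_smul' := fun _ _ => rfl }

theorem hasDerivAt_expM {k : ℕ} (B : Matrix (Fin k) (Fin k) ℂ) (x : ℝ) :
    HasDerivAt (fun t : ℝ => exp ((t : ℝ) • B)) (B * exp ((x : ℝ) • B)) x := by
  have h := hasDerivAt_exp_smul_const' (𝕂 := ℝ) B x
  exact h

noncomputable def fcCLM₁ : Matrix l m ℂ →L[ℝ] Matrix l (m ⊕ o) ℂ :=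
  LinearMap.toContinuousLinearMap
    { toFun := fun X => fromCols X 0
      map_add' := fun X Y => by ext i (j | j) <;> simp [fromCols]
      map_smul' := fun c X => by ext i (j | j) <;> simp [fromCols] }

noncomputable def fcCLM₂ : Matrix l o ℂ →L[ℝ] Matrix l (m ⊕ o) ℂ :=
  LinearMap.toContinuousLinearMap
    { toFun := fun Y => fromCols 0 Y
      map_add' := fun X Y => by ext i (j | j) <;> simp [fromCols]
      map_smul' := fun c X => by ext i (j | j) <;> simp [fromCols] }

omit [Fintype l] [Fintype m] [Fintype o] in
lemma fromCols_eq_add (X : Matrix l m ℂ) (Y : Matrix l o ℂ) :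
    fromCols X Y = fromCols X 0 + fromCols 0 Y := by
  ext i (j | j) <;> simp [fromCols]

theorem _root_.HasDerivAt.fromCols {f : ℝ → Matrix l m ℂ} {g : ℝ → Matrix l o ℂ}
    {f' : Matrix l m ℂ} {g' : Matrix l o ℂ} {x : ℝ}
    (hf : HasDerivAt f f' x) (hg : HasDerivAt g g' x) :
    HasDerivAt (fun t => fromCols (f t) (g t)) (fromCols f' g') x := by
  have h1 : HasDerivAt (fun t => Matrix.fromCols (f t) (0 : Matrix l o ℂ)) (Matrix.fromCols f' 0) x := by
    exact (fcCLM₁ (o := o)).hasFDerivAt.comp_hasDerivAt x hf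
  have h2 : HasDerivAt (fun t => Matrix.fromCols (0 : Matrix l m ℂ) (g t)) (Matrix.fromCols 0 g') x := by
    exact (fcCLM₂ (m := m)).hasFDerivAt.comp_hasDerivAt x hg
  have := h1.add h2
  simpa [← fromCols_eq_add, Pi.add_def] using this

theorem key {n p : ℕ} (A : Matrix (Fin n) (Fin n) ℂ) (D₁ D₂ : Matrix (Fin n) (Fin p) ℂ) :
    A * (fromCols D₁ D₂ * (fromCols D₁ D₂)ᴴ)
      - (fromCols D₁ D₂ * (fromCols D₁ D₂)ᴴ) * Aᴴ =
    Complex.I • ((fromCols ((-Complex.I) • (A * D₁)) (Complex.I • (A * D₂))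
        * (fromBlocks 1 0 0 (-1) : Matrix (Fin p ⊕ Fin p) (Fin p ⊕ Fin p) ℂ) + fromCols D₁ D₂ * (0 : Matrix (Fin p ⊕ Fin p) (Fin p ⊕ Fin p) ℂ)) * (fromCols D₁ D₂)ᴴ
      + fromCols D₁ D₂ * (fromBlocks 1 0 0 (-1) : Matrix (Fin p ⊕ Fin p) (Fin p ⊕ Fin p) ℂ)
        * (fromCols ((-Complex.I) • (A * D₁)) (Complex.I • (A * D₂)))ᴴ) := by
  simp only [Matrix.mul_zero, add_zero, fromCols_mul_fromBlocks,
    conjTranspose_fromCols_eq_fromRows_conjTranspose, fromCols_mul_fromRows,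
    Matrix.mul_one, Matrix.mul_zero, Matrix.zero_mul, add_zero, zero_add,
    Matrix.mul_neg, Matrix.neg_mul, conjTranspose_smul, Matrix.smul_mul, Matrix.mul_smul,
    Matrix.mul_add, Matrix.add_mul, smul_smul, star_smul]
  simp only [star_neg, Complex.star_def, Complex.conj_I, conjTranspose_mul,
    conjTranspose_conjTranspose, smul_add, smul_neg, smul_smul, mul_neg, neg_mul,
    Complex.I_mul_I, neg_neg, one_smul, neg_smul, neg_one_smul, Matrix.mul_assoc]
  abel

end Stmt11Aux

theorem stmt_11_aux {n p : ℕ} (A : Matrix (Fin n) (Fin n) ℂ)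
    (Φ₁ Φ₂ : Matrix (Fin n) (Fin p) ℂ)
    (jm : Matrix (Fin p ⊕ Fin p) (Fin p ⊕ Fin p) ℂ)
    (hj : jm = fromBlocks 1 0 0 (-1))
    (P : ℝ → Matrix (Fin n) (Fin p ⊕ Fin p) ℂ)
    (hP : ∀ x : ℝ, P x = fromCols
      (NormedSpace.exp (((-Complex.I) * (x : ℂ)) • A) * Φ₁)
      (NormedSpace.exp ((Complex.I * (x : ℂ)) • A) * Φ₂))
    (S : ℝ → Matrix (Fin n) (Fin n) ℂ)
    (hS : ∀ x : ℝ, S x = 1 + Matrix.of (fun i k =>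
      ∫ t in (0:ℝ)..x, (P t * (P t)ᴴ) i k))
    (hid : A - Aᴴ = Complex.I • (P 0 * jm * (P 0)ᴴ)) :
    ∀ x : ℝ, 0 ≤ x →
      A * S x - S x * Aᴴ = Complex.I • (P x * jm * (P x)ᴴ) := by
  intro x _
  set B₁ := (-Complex.I) • A with hB₁
  set B₂ := Complex.I • A with hB₂
  set C₁ : ℝ → Matrix (Fin n) (Fin p) ℂ := fun t => exp ((t : ℝ) • B₁) * Φ₁ with hC₁
  set C₂ : ℝ → Matrix (Fin n) (Fin p) ℂ := fun t => exp ((t : ℝ) • B₂) * Φ₂ with hC₂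
  have hsm : ∀ (c : ℂ) (t : ℝ), (c * (t : ℂ)) • A = (t : ℝ) • (c • A) := by
    intro c t
    rw [smul_comm, ← algebraMap_smul ℂ t A, smul_smul]
    norm_num [Algebra.algebraMap_self, mul_comm]
  have hPt : ∀ t : ℝ, P t = fromCols (C₁ t) (C₂ t) := by
    intro t
    rw [hP t, hC₁, hC₂, hB₁, hB₂, hsm (-Complex.I) t, hsm Complex.I t]
  -- derivatives of the two column blocks
  have hC₁d : ∀ t : ℝ, HasDerivAt C₁ ((-Complex.I) • (A * C₁ t)) t := by
    intro t
    have h := (Stmt11Aux.hasDerivAt_expM B₁ t).matmul (hasDerivAt_const t Φ₁)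
    simp only [Matrix.mul_zero, add_zero] at h
    convert h using 1
    rw [hC₁]
    simp [hB₁, Matrix.smul_mul, Matrix.mul_assoc, neg_smul, smul_neg]
  have hC₂d : ∀ t : ℝ, HasDerivAt C₂ (Complex.I • (A * C₂ t)) t := by
    intro t
    have h := (Stmt11Aux.hasDerivAt_expM B₂ t).matmul (hasDerivAt_const t Φ₂)
    simp only [Matrix.mul_zero, add_zero] at h
    convert h using 1
    rw [hC₂]
    simp [hB₂, Matrix.smul_mul, Matrix.mul_assoc, neg_smul, smul_neg]
  have hPd : ∀ t : ℝ, HasDerivAt P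
      (fromCols ((-Complex.I) • (A * C₁ t)) (Complex.I • (A * C₂ t))) t := by
    intro t
    have h := (hC₁d t).fromCols (hC₂d t)
    have : P = fun t => fromCols (C₁ t) (C₂ t) := funext hPt
    rw [this]
    exact h
  set G : ℝ → Matrix (Fin n) (Fin n) ℂ := fun t => Complex.I • (P t * jm * (P t)ᴴ) with hG
  set φ : ℝ → Matrix (Fin n) (Fin n) ℂ :=
    fun t => A * (P t * (P t)ᴴ) - (P t * (P t)ᴴ) * Aᴴ with hφ
  have hGd : ∀ t : ℝ, HasDerivAt G (φ t) t := by
    intro t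
    have h1 := ((hPd t).matmul (hasDerivAt_const t jm)).matmul ((hPd t).ct)
    have h2 := h1.const_smul Complex.I
    refine h2.congr_deriv ?_
    symm
    simp only [hφ, hPt t, hj]
    exact Stmt11Aux.key A (C₁ t) (C₂ t)
  -- continuity and integrability
  have hPcont : Continuous P := by
    have : Differentiable ℝ P := fun t => (hPd t).differentiableAt
    exact this.continuous
  have hPPcont : Continuous fun t => P t * (P t)ᴴ :=
    hPcont.matrix_mul hPcont.matrix_conjTranspose
  have hPPint : IntervalIntegrable (fun t => P t * (P t)ᴴ) volume 0 x :=
    hPPcont.intervalIntegrable 0 x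
  have hφcont : Continuous φ :=
    (continuous_const.matrix_mul hPPcont).sub (hPPcont.matrix_mul continuous_const)
  have hFTC : (∫ t in (0:ℝ)..x, φ t) = G x - G 0 :=
    intervalIntegral.integral_eq_sub_of_hasDerivAt (fun t _ => hGd t)
      (hφcont.intervalIntegrable 0 x)
  set N : Matrix (Fin n) (Fin n) ℂ := ∫ t in (0:ℝ)..x, P t * (P t)ᴴ with hNdef
  have hN : Matrix.of (fun i k => ∫ t in (0:ℝ)..x, (P t * (P t)ᴴ) i k) = N := by
    ext i k
    have := (Stmt11Aux.entryCLM (l := Fin n) (m := Fin n) i k).intervalIntegral_comp_comm hPPint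
    exact this
  have hAN : A * N = ∫ t in (0:ℝ)..x, A * (P t * (P t)ᴴ) := by
    have := (Stmt11Aux.mulCLM (l := Fin n) (m := Fin n) (o := Fin n) A).intervalIntegral_comp_comm
      hPPint
    simpa using this.symm
  have hNA : N * Aᴴ = ∫ t in (0:ℝ)..x, (P t * (P t)ᴴ) * Aᴴ := by
    have := ((Stmt11Aux.mulCLM (l := Fin n) (m := Fin n) (o := Fin n)).flip
      Aᴴ).intervalIntegral_comp_comm hPPint
    simpa [ContinuousLinearMap.flip_apply] using this.symm
  have hsub : A * N - N * Aᴴ = ∫ t in (0:ℝ)..x, φ t := by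
    rw [hAN, hNA, hφ, ← intervalIntegral.integral_sub
      ((continuous_const.matrix_mul hPPcont).intervalIntegrable 0 x)
      ((hPPcont.matrix_mul continuous_const).intervalIntegrable 0 x)]
  have hG0 : G 0 = A - Aᴴ := (hid).symm
  rw [hS x, hN, Matrix.mul_add, Matrix.add_mul, Matrix.mul_one, Matrix.one_mul]
  have : A * N - N * Aᴴ = G x - G 0 := by rw [hsub, hFTC]
  rw [hG0] at this
  have hfin : A + A * N - (Aᴴ + N * Aᴴ) = (A - Aᴴ) + (A * N - N * Aᴴ) := by abel
  rw [hfin, this]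
  abel


end LocalInst

/-- For Π(x) = [e^{−ixA}Φ₁  e^{ixA}Φ₂], S(x) = I + ∫₀ˣ Π Π* dt, the identity
A − A* = i Π(0) j Π(0)* at x = 0 propagates: A S(x) − S(x) A* = i Π(x) j Π(x)*
for all x ≥ 0. -/
theorem stmt_11 {n p : ℕ} (A : Matrix (Fin n) (Fin n) ℂ)
    (Φ₁ Φ₂ : Matrix (Fin n) (Fin p) ℂ)
    (jm : Matrix (Fin p ⊕ Fin p) (Fin p ⊕ Fin p) ℂ)
    (hj : jm = fromBlocks 1 0 0 (-1))
    (P : ℝ → Matrix (Fin n) (Fin p ⊕ Fin p) ℂ)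
    (hP : ∀ x : ℝ, P x = fromCols
      (NormedSpace.exp (((-Complex.I) * (x : ℂ)) • A) * Φ₁)
      (NormedSpace.exp ((Complex.I * (x : ℂ)) • A) * Φ₂))
    (S : ℝ → Matrix (Fin n) (Fin n) ℂ)
    (hS : ∀ x : ℝ, S x = 1 + Matrix.of (fun i k =>
      ∫ t in (0:ℝ)..x, (P t * (P t)ᴴ) i k))
    (hid : A - Aᴴ = Complex.I • (P 0 * jm * (P 0)ᴴ)) :
    ∀ x : ℝ, 0 ≤ x →
      A * S x - S x * Aᴴ = Complex.I • (P x * jm * (P x)ᴴ) := by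
  exact stmt_11_aux A Φ₁ Φ₂ jm hj P hP S hS hid
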